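/- Let G be a finite group whose order is divisible by at least two distinct primes. Then G has dense CD-subgroups if and only if G is a nonabelian group of order pq for distinct primes p and q. -/

import Mathlib

set_option linter.unusedSectionVars false
set_option maxHeartbeats 1000000

open Pointwise

/-- Chermak–Delgado measure of a subgroup. -/
noncomputable def mCD (G : Type*) [Group G] (H : Subgroup G) : ℕ :=
  Nat.card H * Nat.card (Subgroup.centralizer (H : Set G))

/-- Maximal Chermak–Delgado measure. -/
noncomputable def mStar (G : Type*) [Group G] : ℕ :=
  sSup (Set.range (mCD G))

/-- Chermak–Delgado lattice (as a set of subgroups). -/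
def CD (G : Type*) [Group G] : Set (Subgroup G) :=
  {H | mCD G H = mStar G}

/-- A group has dense CD-subgroups if for all subgroups H < K with H not
maximal in K, there exists X in CD(G) with H < X < K. -/
def DenseCD (G : Type*) [Group G] : Prop :=
  ∀ H K : Subgroup G, H < K → (∃ L : Subgroup G, H < L ∧ L < K) →
    ∃ X ∈ CD G, H < X ∧ X < K

theorem Set.Finite.exists_minimal_wrt {α β : Type*} [PartialOrder β] (f : α → β) (s : Set α)
    (h : s.Finite) (hs : s.Nonempty) : ∃ a ∈ s, ∀ a' ∈ s, f a' ≤ f a → f a = f a' := by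
  obtain ⟨a, ha, hmin⟩ := h.exists_minimalFor f s hs
  exact ⟨a, ha, fun a' h' hle => le_antisymm (hmin h' hle) hle⟩

theorem Set.Finite.exists_maximal_wrt {α β : Type*} [PartialOrder β] (f : α → β) (s : Set α)
    (h : s.Finite) (hs : s.Nonempty) : ∃ a ∈ s, ∀ a' ∈ s, f a ≤ f a' → f a = f a' := by
  obtain ⟨a, ha, hmax⟩ := h.exists_maximalFor f s hs
  exact ⟨a, ha, fun a' h' hle => le_antisymm hle (hmax h' hle)⟩

namespace CDWork

open Subgroup

lemma dvd_prime_mul {p q d : ℕ} (hp : p.Prime) (hq : q.Prime) (hne : p ≠ q)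
    (h : d ∣ p * q) : d = 1 ∨ d = p ∨ d = q ∨ d = p * q := by
  by_cases hpd : p ∣ d <;> by_cases hqd : q ∣ d
  · right; right; right
    refine Nat.dvd_antisymm h ?_
    exact Nat.Coprime.mul_dvd_of_dvd_of_dvd ((Nat.coprime_primes hp hq).mpr hne) hpd hqd
  · have hco : Nat.Coprime d q := ((Nat.Prime.coprime_iff_not_dvd hq).mpr hqd).symm
    have hdp : d ∣ p := hco.dvd_of_dvd_mul_right h
    rcases (Nat.dvd_prime hp).mp hdp with h1 | h1
    · left; exact h1
    · right; left; exact h1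
  · have hco : Nat.Coprime d p := ((Nat.Prime.coprime_iff_not_dvd hp).mpr hpd).symm
    have hdq : d ∣ q := hco.dvd_of_dvd_mul_left h
    rcases (Nat.dvd_prime hq).mp hdq with h1 | h1
    · left; exact h1
    · right; right; left; exact h1
  · have hco : Nat.Coprime d p := ((Nat.Prime.coprime_iff_not_dvd hp).mpr hpd).symm
    have hdq : d ∣ q := hco.dvd_of_dvd_mul_left h
    rcases (Nat.dvd_prime hq).mp hdq with h1 | h1
    · left; exact h1
    · exact absurd (h1 ▸ dvd_refl d) hqd


section Main

variable {G : Type*} [Group G] [Finite G]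

lemma mCD_pos (H : Subgroup G) : 0 < mCD G H :=
  Nat.mul_pos Nat.card_pos Nat.card_pos

lemma mCD_le_mStar (H : Subgroup G) : mCD G H ≤ mStar G :=
  le_csSup (Set.finite_range _).bddAbove ⟨H, rfl⟩

lemma exists_mem_CD (G : Type*) [Group G] [Finite G] : ∃ X : Subgroup G, X ∈ CD G := by
  have h := Nat.sSup_mem (Set.range_nonempty (mCD G)) (Set.finite_range _).bddAbove
  obtain ⟨X, hX⟩ := h
  exact ⟨X, hX⟩

lemma mStar_pos : 0 < mStar (G := G) :=
  lt_of_lt_of_le (mCD_pos ⊥) (mCD_le_mStar ⊥)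

lemma centralizer_coe_bot : centralizer ((⊥ : Subgroup G) : Set G) = ⊤ := by
  rw [centralizer_eq_top_iff_subset]
  rintro x hx
  have : x = 1 := by simpa using hx
  subst this; exact Subgroup.one_mem _


lemma mCD_bot : mCD G ⊥ = Nat.card G := by
  unfold mCD
  rw [centralizer_coe_bot, Subgroup.card_bot, one_mul]
  exact Nat.card_congr Subgroup.topEquiv.toEquiv

lemma mCD_top : mCD G ⊤ = Nat.card G * Nat.card (Subgroup.center G) := by
  unfold mCD
  rw [Subgroup.coe_top, Subgroup.centralizer_univ]
  congr 1
  exact Nat.card_congr Subgroup.topEquiv.toEquiv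

lemma card_lt_of_lt {H K : Subgroup G} (h : H < K) : Nat.card H < Nat.card K :=
  lt_of_le_of_ne (Subgroup.card_le_of_le h.le)
    (fun he => h.ne (Subgroup.eq_of_le_of_card_ge h.le he.ge))

/-- |H| * |K| ≤ |HK| * |H ⊓ K| -/
lemma card_mul_card_le' (H K : Subgroup G) :
    Nat.card H * Nat.card K
      ≤ Nat.card ((H : Set G) * (K : Set G) : Set G) * Nat.card (H ⊓ K : Subgroup G) := by
  classical
  rw [← Nat.card_prod, ← Nat.card_prod]
  have hrep : ∀ x : ((H : Set G) * (K : Set G) : Set G),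
      ∃ hk : G × G, hk.1 ∈ H ∧ hk.2 ∈ K ∧ hk.1 * hk.2 = (x : G) := by
    rintro ⟨x, hx⟩
    rw [Set.mem_mul] at hx
    obtain ⟨a, ha, b, hb, hab⟩ := hx
    exact ⟨(a, b), ha, hb, hab⟩
  choose rep hrep1 hrep2 hrep3 using hrep
  have hmem : ∀ (h : H) (k : K), ((h : G) * k) ∈ ((H : Set G) * (K : Set G) : Set G) :=
    fun h k => Set.mul_mem_mul h.2 k.2
  let f : H × K → (((H : Set G) * (K : Set G) : Set G)) × (H ⊓ K : Subgroup G) := fun hk =>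
    ⟨⟨(hk.1 : G) * hk.2, hmem hk.1 hk.2⟩,
     ⟨(rep ⟨(hk.1 : G) * hk.2, hmem hk.1 hk.2⟩).1⁻¹ * hk.1, by
      set x : ((H : Set G) * (K : Set G) : Set G) := ⟨(hk.1 : G) * hk.2, hmem hk.1 hk.2⟩ with hxdef
      rw [Subgroup.mem_inf]
      constructor
      · exact mul_mem (inv_mem (hrep1 x)) hk.1.2
      · have h3 : (rep x).1 * (rep x).2 = (hk.1 : G) * hk.2 := hrep3 x
        have heq : (rep x).1⁻¹ * (hk.1 : G) = (rep x).2 * (hk.2 : G)⁻¹ := by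
          have := congrArg (fun z => (rep x).1⁻¹ * z * (hk.2 : G)⁻¹) h3
          simpa [mul_assoc] using this.symm
        rw [heq]
        exact mul_mem (hrep2 x) (inv_mem hk.2.2)⟩⟩
  have hinj : Function.Injective f := by
    rintro ⟨h, k⟩ ⟨h', k'⟩ he
    have h1 : ((h : G) * k) = ((h' : G) * k') :=
      congrArg (fun y => ((y.1 : G))) he
    have hx : (⟨(h : G) * k, hmem h k⟩ :
        ((H : Set G) * (K : Set G) : Set G)) = ⟨(h' : G) * k', hmem h' k'⟩ := Subtype.ext h1
    have h2 : ((rep ⟨(h : G) * k, hmem h k⟩).1⁻¹ * h : G)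
        = ((rep ⟨(h' : G) * k', hmem h' k'⟩).1⁻¹ * h' : G) := by
      have := congrArg (fun y => ((y.2 : G))) he
      exact this
    rw [hx] at h2
    have hh : (h : G) = h' := mul_left_cancel h2
    have hkk : (k : G) = k' := mul_left_cancel (hh ▸ h1)
    exact Prod.ext (Subtype.ext hh) (Subtype.ext hkk)
  exact Nat.card_le_card_of_injective f hinj

lemma centralizer_sup' (H K : Subgroup G) :
    centralizer ((H ⊔ K : Subgroup G) : Set G)
      = centralizer (H : Set G) ⊓ centralizer (K : Set G) := by
  apply le_antisymm
  · exact le_inf (Subgroup.centralizer_le (SetLike.coe_subset_coe.mpr le_sup_left))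
      (Subgroup.centralizer_le (SetLike.coe_subset_coe.mpr le_sup_right))
  · rw [le_centralizer_iff]
    apply sup_le
    · exact le_trans (le_centralizer_iff.mpr le_rfl)
        (Subgroup.centralizer_le (SetLike.coe_subset_coe.mpr inf_le_left))
    · exact le_trans (le_centralizer_iff.mpr le_rfl)
        (Subgroup.centralizer_le (SetLike.coe_subset_coe.mpr inf_le_right))

lemma mCD_mul_mCD_le (H K : Subgroup G) :
    mCD G H * mCD G K ≤ mCD G (H ⊓ K) * mCD G (H ⊔ K) := by
  have hsetsub : ((H : Set G) * (K : Set G) : Set G) ⊆ ((H ⊔ K : Subgroup G) : Set G) := by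
    rintro x ⟨a, ha, b, hb, rfl⟩
    exact mul_mem (le_sup_left (a := H) (b := K) ha) (le_sup_right (a := H) (b := K) hb)
  have h1 : Nat.card H * Nat.card K
      ≤ Nat.card (H ⊔ K : Subgroup G) * Nat.card (H ⊓ K : Subgroup G) := by
    refine le_trans (card_mul_card_le' H K) ?_
    gcongr
    calc Nat.card ((H : Set G) * (K : Set G) : Set G)
        ≤ Nat.card (((H ⊔ K : Subgroup G) : Set G)) :=
          Nat.card_mono (Set.toFinite _) hsetsub
      _ = Nat.card (H ⊔ K : Subgroup G) := by rw [SetLike.coe_sort_coe]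
  have hsetsub2 : ((centralizer (H : Set G) : Subgroup G) : Set G)
      * ((centralizer (K : Set G) : Subgroup G) : Set G)
      ⊆ ((centralizer ((H ⊓ K : Subgroup G) : Set G) : Subgroup G) : Set G) := by
    rintro x ⟨a, ha, b, hb, rfl⟩
    have ha' : a ∈ centralizer ((H ⊓ K : Subgroup G) : Set G) :=
      Subgroup.centralizer_le (SetLike.coe_subset_coe.mpr inf_le_left) ha
    have hb' : b ∈ centralizer ((H ⊓ K : Subgroup G) : Set G) :=
      Subgroup.centralizer_le (SetLike.coe_subset_coe.mpr inf_le_right) hb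
    exact mul_mem ha' hb'
  have h2 : Nat.card (centralizer (H : Set G)) * Nat.card (centralizer (K : Set G))
      ≤ Nat.card (centralizer ((H ⊓ K : Subgroup G) : Set G))
        * Nat.card (centralizer ((H ⊔ K : Subgroup G) : Set G)) := by
    refine le_trans (card_mul_card_le' (centralizer (H : Set G)) (centralizer (K : Set G))) ?_
    have hstep : Nat.card (((centralizer (H : Set G) : Subgroup G) : Set G)
          * ((centralizer (K : Set G) : Subgroup G) : Set G) : Set G)
        ≤ Nat.card (centralizer ((H ⊓ K : Subgroup G) : Set G)) := by
      calc Nat.card (((centralizer (H : Set G) : Subgroup G) : Set G)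
            * ((centralizer (K : Set G) : Subgroup G) : Set G) : Set G)
          ≤ Nat.card (((centralizer ((H ⊓ K : Subgroup G) : Set G) : Subgroup G) : Set G)) :=
            Nat.card_mono (Set.toFinite _) hsetsub2
        _ = _ := by rw [SetLike.coe_sort_coe]
    have hinf : (centralizer (H : Set G) ⊓ centralizer (K : Set G) : Subgroup G)
        = centralizer ((H ⊔ K : Subgroup G) : Set G) := (centralizer_sup' H K).symm
    rw [hinf]
    exact Nat.mul_le_mul_right _ hstep
  calc mCD G H * mCD G K
      = (Nat.card H * Nat.card K) *
        (Nat.card (centralizer (H : Set G)) * Nat.card (centralizer (K : Set G))) := by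
        unfold mCD; ring
    _ ≤ (Nat.card (H ⊔ K : Subgroup G) * Nat.card (H ⊓ K : Subgroup G)) *
        (Nat.card (centralizer ((H ⊓ K : Subgroup G) : Set G))
          * Nat.card (centralizer ((H ⊔ K : Subgroup G) : Set G))) :=
        Nat.mul_le_mul h1 h2
    _ = mCD G (H ⊓ K) * mCD G (H ⊔ K) := by unfold mCD; ring


lemma inf_mem_CD {H K : Subgroup G} (hH : H ∈ CD G) (hK : K ∈ CD G) : H ⊓ K ∈ CD G := by
  have h1 := mCD_mul_mCD_le H K
  rw [hH, hK] at h1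
  have h2 : mCD G (H ⊓ K) * mCD G (H ⊔ K) ≤ mCD G (H ⊓ K) * mStar G :=
    Nat.mul_le_mul_left _ (mCD_le_mStar _)
  have h4 : mStar G ≤ mCD G (H ⊓ K) :=
    Nat.le_of_mul_le_mul_right (le_trans h1 h2) mStar_pos
  exact le_antisymm (mCD_le_mStar _) h4

lemma centralizer_mem_CD {X : Subgroup G} (hX : X ∈ CD G) :
    centralizer (X : Set G) ∈ CD G
      ∧ centralizer ((centralizer (X : Set G) : Subgroup G) : Set G) = X := by
  have hle : X ≤ centralizer ((centralizer (X : Set G) : Subgroup G) : Set G) :=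
    le_centralizer_iff.mpr le_rfl
  have h1 : mStar G ≤ mCD G (centralizer (X : Set G)) := by
    calc mStar G = mCD G X := hX.symm
      _ = Nat.card X * Nat.card (centralizer (X : Set G)) := rfl
      _ ≤ Nat.card (centralizer ((centralizer (X : Set G) : Subgroup G) : Set G))
            * Nat.card (centralizer (X : Set G)) := by
          gcongr
          exact Subgroup.card_le_of_le hle
      _ = mCD G (centralizer (X : Set G)) := by unfold mCD; ring
  have hcd : centralizer (X : Set G) ∈ CD G := le_antisymm (mCD_le_mStar _) h1
  have hcards : Nat.card (centralizer ((centralizer (X : Set G) : Subgroup G) : Set G))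
      ≤ Nat.card X := by
    by_contra hc
    push_neg at hc
    have : mStar G < mCD G (centralizer (X : Set G)) := by
      calc mStar G = Nat.card X * Nat.card (centralizer (X : Set G)) := hX.symm
        _ < Nat.card (centralizer ((centralizer (X : Set G) : Subgroup G) : Set G))
              * Nat.card (centralizer (X : Set G)) := by
            exact (Nat.mul_lt_mul_right Nat.card_pos).mpr hc
        _ = mCD G (centralizer (X : Set G)) := by unfold mCD; ring
    exact absurd (mCD_le_mStar (centralizer (X : Set G))) (not_le.mpr this)
  exact ⟨hcd, (Subgroup.eq_of_le_of_card_ge hle hcards).symm⟩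

lemma center_le_of_mem_CD {X : Subgroup G} (hX : X ∈ CD G) : Subgroup.center G ≤ X := by
  rw [← (centralizer_mem_CD hX).2]
  exact Subgroup.center_le_centralizer _

lemma exists_min_CD (G : Type*) [Group G] [Finite G] :
    ∃ M ∈ CD G, ∀ X ∈ CD G, M ≤ X := by
  obtain ⟨X0, hX0⟩ : ∃ X : Subgroup G, X ∈ CD G := by
    have h := Nat.sSup_mem (Set.range_nonempty (mCD G)) (Set.finite_range _).bddAbove
    obtain ⟨X, hX⟩ := h
    exact ⟨X, hX⟩
  obtain ⟨M, hM, hmin⟩ := Set.Finite.exists_minimal_wrt (fun X : Subgroup G => Nat.card X)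
    (CD G) (Set.toFinite _) ⟨X0, hX0⟩
  refine ⟨M, hM, fun X hX => ?_⟩
  have hinf := inf_mem_CD hM hX
  have hle : Nat.card (M ⊓ X : Subgroup G) ≤ Nat.card M :=
    Subgroup.card_le_of_le inf_le_left
  have heq : Nat.card M = Nat.card (M ⊓ X : Subgroup G) := hmin _ hinf hle
  have : M ⊓ X = M := Subgroup.eq_of_le_of_card_ge inf_le_left heq.le
  rw [← this]
  exact inf_le_right

lemma smul_centralizer (a : MulAut G) (H : Subgroup G) :
    centralizer ((a • H : Subgroup G) : Set G) = a • centralizer (H : Set G) := by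
  ext x
  rw [Subgroup.mem_pointwise_smul_iff_inv_smul_mem]
  simp only [mem_centralizer_iff]
  constructor
  · intro hx h hh
    have h1 := hx (a h) (by
      rw [SetLike.mem_coe, Subgroup.mem_pointwise_smul_iff_inv_smul_mem]
      simpa using hh)
    -- h1 : a h * x = x * a h ; goal : h * a⁻¹ • x = a⁻¹ • x * h
    apply a.injective
    simpa [map_mul] using h1
  · intro hx h hh
    rw [SetLike.mem_coe, Subgroup.mem_pointwise_smul_iff_inv_smul_mem] at hh
    have h1 := hx (a⁻¹ h) hh
    -- h1 : a⁻¹ h * a⁻¹ x = a⁻¹ x * a⁻¹ h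
    apply (a⁻¹ : MulAut G).injective
    simpa [map_mul] using h1

lemma mCD_smul (a : MulAut G) (H : Subgroup G) : mCD G (a • H) = mCD G H := by
  unfold mCD
  rw [smul_centralizer]
  rw [← Nat.card_congr (Subgroup.equivSMul a H).toEquiv,
      ← Nat.card_congr (Subgroup.equivSMul a (centralizer (H : Set G))).toEquiv]

lemma min_CD_normal {M : Subgroup G} (hM : M ∈ CD G) (hmin : ∀ X ∈ CD G, M ≤ X) :
    M.Normal := by
  constructor
  intro m hm g
  have h1 : (MulAut.conj g⁻¹ • M : Subgroup G) ∈ CD G := by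
    have : mCD G (MulAut.conj g⁻¹ • M) = mStar G := by rw [mCD_smul]; exact hM
    exact this
  have h2 := hmin _ h1 hm
  rw [Subgroup.mem_pointwise_smul_iff_inv_smul_mem] at h2
  simpa using h2


lemma join_abelian {A : Subgroup G} (hA : A ≤ centralizer (A : Set G)) {c : G}
    (hc : c ∈ centralizer (A : Set G)) :
    (A ⊔ Subgroup.zpowers c) ≤ centralizer ((A ⊔ Subgroup.zpowers c : Subgroup G) : Set G) := by
  rw [centralizer_sup']
  apply sup_le
  · refine le_inf hA ?_
    rw [le_centralizer_iff]
    exact Subgroup.zpowers_le.mpr hc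
  · refine le_inf (Subgroup.zpowers_le.mpr hc) ?_
    have : IsMulCommutative (Subgroup.zpowers c) := Subgroup.zpowers_isMulCommutative c
    exact Subgroup.le_centralizer _

lemma exists_selfCentralizing (hd : DenseCD G) :
    ∃ A : Subgroup G, A ∈ CD G ∧ centralizer (A : Set G) = A := by
  classical
  obtain ⟨M, hMCD, hMmin⟩ := exists_min_CD G
  have hMS : M ≤ centralizer (M : Set G) := hMmin _ (centralizer_mem_CD hMCD).1
  -- maximal element of S by cardinality
  obtain ⟨A, hAS, hAmax⟩ := Set.Finite.exists_maximal_wrt (fun X : Subgroup G => Nat.card X)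
    {X : Subgroup G | X ∈ CD G ∧ X ≤ centralizer (X : Set G)} (Set.toFinite _) ⟨M, hMCD, hMS⟩
  obtain ⟨hACD, hAle⟩ := hAS
  refine ⟨A, hACD, ?_⟩
  by_contra hne
  have hlt : A < centralizer (A : Set G) := lt_of_le_of_ne hAle (fun h => hne h.symm)
  have hCA_CD : centralizer (A : Set G) ∈ CD G := (centralizer_mem_CD hACD).1
  -- helper to contradict maximality
  have hnotS : ∀ X : Subgroup G, X ∈ CD G → X ≤ centralizer (X : Set G) → A < X → False := by
    intro X h1 h2 h3
    have := hAmax X ⟨h1, h2⟩ (Subgroup.card_le_of_le h3.le)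
    exact absurd this (Nat.ne_of_lt (card_lt_of_lt h3))
  by_cases hcov : ∃ L : Subgroup G, A < L ∧ L < centralizer (A : Set G)
  · -- non-cover case
    obtain ⟨X0, hX0⟩ := hd A (centralizer (A : Set G)) hlt hcov
    obtain ⟨Xm, hXm, hXmin⟩ := Set.Finite.exists_minimal_wrt (fun X : Subgroup G => Nat.card X)
      {X : Subgroup G | X ∈ CD G ∧ A < X ∧ X < centralizer (A : Set G)} (Set.toFinite _)
      ⟨X0, hX0.1, hX0.2⟩
    obtain ⟨hXCD, hAX, hXC⟩ := hXm
    -- A is maximal in X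
    have hcovX : ¬ ∃ L : Subgroup G, A < L ∧ L < Xm := by
      rintro ⟨L, hal, hlx⟩
      obtain ⟨Y, hYCD, hAY, hYX⟩ := hd A Xm hAX ⟨L, hal, hlx⟩
      have hYmem : Y ∈ {X : Subgroup G | X ∈ CD G ∧ A < X ∧ X < centralizer (A : Set G)} :=
        ⟨hYCD, hAY, lt_trans hYX hXC⟩
      have := hXmin _ hYmem (Subgroup.card_le_of_le hYX.le)
      exact absurd this (Nat.ne_of_gt (card_lt_of_lt hYX))
    have hAleCX : A ≤ centralizer (Xm : Set G) := le_centralizer_iff.mp hXC.le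
    have hW : Xm ⊓ centralizer (Xm : Set G) ∈ CD G :=
      inf_mem_CD hXCD (centralizer_mem_CD hXCD).1
    have hAW : A ≤ Xm ⊓ centralizer (Xm : Set G) := le_inf hAX.le hAleCX
    have hWA : Xm ⊓ centralizer (Xm : Set G) = A := by
      rcases eq_or_lt_of_le hAW with h | h
      · exact h.symm
      · rcases eq_or_lt_of_le (inf_le_left : Xm ⊓ centralizer (Xm : Set G) ≤ Xm) with h2 | h2
        · -- W = X, so X abelian, contradicting maximality of A
          exfalso
          apply hnotS Xm hXCD _ hAX
          rw [← h2]
          exact le_trans inf_le_right (by rw [h2])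
        · exact absurd (hcovX ⟨_, h, h2⟩) (fun f => f)
    -- X = A ⊔ zpowers x for x ∈ X \ A, abelian, contradiction
    obtain ⟨x, hxX, hxA⟩ := SetLike.exists_of_lt hAX
    have hxCA : x ∈ centralizer (A : Set G) := hXC.le hxX
    have hBle : A ⊔ Subgroup.zpowers x ≤ Xm := sup_le hAX.le (Subgroup.zpowers_le.mpr hxX)
    have hAB : A < A ⊔ Subgroup.zpowers x :=
      lt_of_le_of_ne le_sup_left (fun h => hxA (h ▸ Subgroup.mem_sup_right (Subgroup.mem_zpowers x)))
    have hBX : A ⊔ Subgroup.zpowers x = Xm := by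
      rcases eq_or_lt_of_le hBle with h | h
      · exact h
      · exact absurd (hcovX ⟨_, hAB, h⟩) (fun f => f)
    have habel : Xm ≤ centralizer (Xm : Set G) := by
      rw [← hBX]
      exact join_abelian hAle hxCA
    have : Xm ⊓ centralizer (Xm : Set G) = Xm := inf_eq_left.mpr habel
    exact absurd (hWA.symm.trans this) hAX.ne
  · -- cover case: centralizer A = A ⊔ zpowers c is abelian
    push_neg at hcov
    obtain ⟨c, hcC, hcA⟩ := SetLike.exists_of_lt hlt
    have hBle : A ⊔ Subgroup.zpowers c ≤ centralizer (A : Set G) :=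
      sup_le hAle (Subgroup.zpowers_le.mpr hcC)
    have hAB : A < A ⊔ Subgroup.zpowers c :=
      lt_of_le_of_ne le_sup_left (fun h => hcA (h ▸ Subgroup.mem_sup_right (Subgroup.mem_zpowers c)))
    have hBeq : A ⊔ Subgroup.zpowers c = centralizer (A : Set G) := by
      rcases eq_or_lt_of_le hBle with h | h
      · exact h
      · exact absurd (hcov _ hAB) (fun f => f h)
    apply hnotS (centralizer (A : Set G)) hCA_CD _ hlt
    rw [← hBeq]
    exact join_abelian hAle hcC


/-- a finite group of order 2+ has a subgroup of any prime order dividing it -/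
lemma exists_subgroup_prime (v : ℕ) (hv : v.Prime) (hdvd : v ∣ Nat.card G) :
    ∃ T : Subgroup G, Nat.card T = v := by
  classical
  haveI : Fintype G := Fintype.ofFinite G
  haveI : Fact v.Prime := ⟨hv⟩
  obtain ⟨g, hg⟩ := exists_prime_orderOf_dvd_card (G := G) v
    (by rwa [← Nat.card_eq_fintype_card])
  exact ⟨Subgroup.zpowers g, by rw [Nat.card_zpowers, hg]⟩

/-- a finite group of composite order has a nontrivial proper subgroup -/
lemma exists_between_of_composite {K : Subgroup G} (h1 : 1 < Nat.card K)
    (h2 : ¬ (Nat.card K).Prime) : ∃ L : Subgroup G, ⊥ < L ∧ L < K := by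
  classical
  set c := Nat.card K with hc
  have hc0 : c ≠ 1 := Nat.ne_of_gt h1
  have hv : c.minFac.Prime := Nat.minFac_prime hc0
  obtain ⟨S, hS⟩ := exists_subgroup_prime (G := K) c.minFac (Nat.minFac_prime hc0)
    (Nat.minFac_dvd c)
  refine ⟨S.map K.subtype, ?_, ?_⟩
  · rw [bot_lt_iff_ne_bot]
    intro he
    have hcard1 : Nat.card (S.map K.subtype) = 1 := Subgroup.card_eq_one.mpr he
    rw [Nat.card_congr (Subgroup.equivMapOfInjective S K.subtype K.subtype_injective).toEquiv.symm, hS] at hcard1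
    exact hv.ne_one hcard1
  · apply lt_of_le_of_ne (Subgroup.map_subtype_le S)
    intro he
    have : Nat.card (S.map K.subtype) = c := by rw [he]
    rw [Nat.card_congr (Subgroup.equivMapOfInjective S K.subtype K.subtype_injective).toEquiv.symm, hS] at this
    exact absurd this (by
      intro hh
      have : c.minFac ≠ c := by
        intro hfc
        exact h2 (hfc ▸ hv)
      exact this hh)

lemma prime_sq_not_prime (u : ℕ) (hu : u.Prime) : ¬ (u ^ 2).Prime := by
  intro h
  have h2u : 2 ≤ u := hu.two_le
  rcases Nat.Prime.eq_one_or_self_of_dvd h u (dvd_pow_self u two_ne_zero) with h1 | h2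
  · exact hu.ne_one h1
  · rw [pow_two] at h2
    nlinarith

/-- a subgroup of prime order is zpowers of an element -/
lemma eq_zpowers_of_prime_card {X : Subgroup G} {u : ℕ} (hu : u.Prime)
    (hX : Nat.card X = u) : ∃ g : G, X = Subgroup.zpowers g := by
  have hne : X ≠ ⊥ := by
    intro he
    rw [he, Subgroup.card_bot] at hX
    exact hu.ne_one hX.symm
  obtain ⟨x, hxX, hx1⟩ : ∃ x ∈ X, x ≠ (1 : G) := by
    by_contra hall
    push_neg at hall
    exact hne (by
      ext y
      simp only [Subgroup.mem_bot]
      exact ⟨fun hy => hall y hy, fun hy => hy ▸ X.one_mem⟩)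
  have hord' : orderOf (⟨x, hxX⟩ : X) = u := by
    have hdvd : orderOf (⟨x, hxX⟩ : X) ∣ u := hX ▸ orderOf_dvd_natCard _
    rcases (Nat.dvd_prime hu).mp hdvd with h1 | h1
    · exfalso
      rw [orderOf_eq_one_iff] at h1
      exact hx1 (congrArg Subtype.val h1)
    · exact h1
  have hord : orderOf x = u := by
    have := orderOf_injective X.subtype X.subtype_injective ⟨x, hxX⟩
    simpa [hord'] using this
  refine ⟨x, ?_⟩
  have hle : Subgroup.zpowers x ≤ X := Subgroup.zpowers_le.mpr hxX
  have hcard : Nat.card X ≤ Nat.card (Subgroup.zpowers x) := by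
    rw [Nat.card_zpowers, hord, hX]
  exact (Subgroup.eq_of_le_of_card_ge hle hcard).symm

/-- A subgroup of prime order is commutative hence below its centralizer -/
lemma prime_card_le_centralizer {X : Subgroup G} {u : ℕ} (hu : u.Prime)
    (hX : Nat.card X = u) : X ≤ centralizer (X : Set G) := by
  obtain ⟨g, rfl⟩ := eq_zpowers_of_prime_card hu hX
  have : IsMulCommutative (Subgroup.zpowers g) := Subgroup.zpowers_isMulCommutative g
  exact Subgroup.le_centralizer _

/-- centralizer of a normal subgroup is normal -/
lemma normal_centralizer {H : Subgroup G} (hH : H.Normal) :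
    (centralizer (H : Set G)).Normal := by
  constructor
  intro x hx g
  rw [Subgroup.mem_centralizer_iff] at hx ⊢
  intro h hh
  have h2 : g⁻¹ * h * g ∈ H := by
    have := hH.conj_mem h hh g⁻¹
    simpa using this
  have h3 := hx _ h2
  -- h3 : (g⁻¹ h g) x = x (g⁻¹ h g); goal : h * (g x g⁻¹) = (g x g⁻¹) * h
  have := congrArg (fun z => g * z * g⁻¹) h3
  simpa [mul_assoc] using this

lemma normal_inf {H K : Subgroup G} (hH : H.Normal) (hK : K.Normal) : (H ⊓ K).Normal := by
  constructor
  intro x hx g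
  rw [Subgroup.mem_inf] at hx ⊢
  exact ⟨hH.conj_mem _ hx.1 g, hK.conj_mem _ hx.2 g⟩

/-- index equal to smallest prime factor implies normal -/
lemma normal_of_index_minFac {D : Subgroup G} (hn : 1 < Nat.card G)
    (h : D.index = (Nat.card G).minFac) : D.Normal := by
  classical
  set u := (Nat.card G).minFac with hu
  have hup : u.Prime := Nat.minFac_prime (Nat.ne_of_gt hn)
  set K := D.normalCore with hK
  have hKle : K ≤ D := Subgroup.normalCore_le D
  have hm : K.relIndex D * D.index = K.index := Subgroup.relIndex_mul_index hKle
  -- K.index divides u !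
  haveI : Fintype (G ⧸ D) := Fintype.ofFinite _
  have hcard : Nat.card (G ⧸ D) = u := by rw [← h, Subgroup.index_eq_card]
  have hdvd : K.index ∣ Nat.factorial u := by
    rw [hK, Subgroup.normalCore_eq_ker, Subgroup.index_ker]
    have h1 : Nat.card (MulAction.toPermHom G (G ⧸ D)).range ∣ Nat.card (Equiv.Perm (G ⧸ D)) :=
      Subgroup.card_subgroup_dvd_card _
    have h2 : Nat.card (Equiv.Perm (G ⧸ D)) = Nat.factorial u := by
      rw [Nat.card_eq_fintype_card, Fintype.card_perm, ← Nat.card_eq_fintype_card, hcard]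
    rwa [h2] at h1
  rw [← hm, h] at hdvd
  -- so relIndex * u ∣ u * (u-1)!
  have h2u : 2 ≤ u := hup.two_le
  have hid : u - 1 + 1 = u := by omega
  have hfac : Nat.factorial u = u * Nat.factorial (u - 1) :=
    (Nat.mul_factorial_pred (by omega)).symm
  rw [hfac] at hdvd
  have hdvd2 : K.relIndex D ∣ Nat.factorial (u - 1) := by
    have h' : K.relIndex D * u ∣ Nat.factorial (u - 1) * u := by
      rw [mul_comm (Nat.factorial (u - 1)) u]
      exact hdvd
    exact (mul_dvd_mul_iff_right (show u ≠ 0 by omega)).mp h'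
  have hrel1 : K.relIndex D = 1 := by
    by_contra hne
    set m := K.relIndex D with hmm
    have hm0 : m ≠ 0 := by
      intro h0
      rw [h0, zero_mul] at hm
      exact (Subgroup.index_ne_zero_of_finite (H := K)) hm.symm
    have hv : m.minFac.Prime := Nat.minFac_prime hne
    have hvd : m.minFac ∣ Nat.card G := by
      calc m.minFac ∣ m := Nat.minFac_dvd m
        _ ∣ K.index := hm ▸ dvd_mul_right m D.index
        _ ∣ Nat.card G := K.index_dvd_card
    have hge : u ≤ m.minFac := Nat.minFac_le_of_dvd hv.two_le hvd
    have hle : m.minFac ≤ u - 1 := (Nat.Prime.dvd_factorial hv).mp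
      (dvd_trans (Nat.minFac_dvd m) hdvd2)
    omega
  have : K = D := by
    have := Subgroup.relIndex_eq_one.mp hrel1
    exact le_antisymm hKle this
  rw [← this]
  exact Subgroup.normalCore_normal D


end Main

lemma card_mulAut_dvd_factorial (H : Type*) [Group H] [Finite H] :
    Nat.card (MulAut H) ∣ Nat.factorial (Nat.card H - 1) := by
  classical
  haveI : Fintype H := Fintype.ofFinite H
  have hiff : ∀ (a : MulAut H) (x : H), x ≠ 1 ↔ a x ≠ 1 := by
    intro a x
    constructor
    · intro hx h1
      exact hx (by
        have : a x = a 1 := by rw [h1, map_one]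
        exact a.injective this)
    · intro hx h1
      exact hx (by rw [h1, map_one])
  let f : MulAut H →* Equiv.Perm {x : H // x ≠ 1} :=
    { toFun := fun a => Equiv.subtypeEquiv a.toEquiv (hiff a)
      map_one' := by
        ext x
        rfl
      map_mul' := by
        intro a b
        ext x
        rfl }
  have hinj : Function.Injective f := by
    intro a b hab
    apply MulEquiv.ext
    intro x
    by_cases hx : x = 1
    · rw [hx, map_one, map_one]
    · have := congrArg
        (fun (σ : Equiv.Perm {y : H // y ≠ 1}) => ((σ ⟨x, hx⟩ : {y : H // y ≠ 1}) : H)) hab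
      exact this
  have h1 : Nat.card (MulAut H) = Nat.card f.range := by
    have h0 := Nat.card_congr (Equiv.ofInjective f hinj)
    rwa [show (Set.range ⇑f) = (f.range : Set _) from (f.coe_range).symm] at h0
  have h2 : Nat.card f.range ∣ Nat.card (Equiv.Perm {x : H // x ≠ 1}) :=
    Subgroup.card_subgroup_dvd_card _
  have h3 : Nat.card (Equiv.Perm {x : H // x ≠ 1}) = Nat.factorial (Nat.card H - 1) := by
    rw [Nat.card_eq_fintype_card, Fintype.card_perm]
    congr 1
    rw [Nat.card_eq_fintype_card]
    have := Fintype.card_subtype_compl (fun x : H => x = 1)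
    have h4 : Fintype.card {x : H // x = 1} = 1 := Fintype.card_subtype_eq (1 : H)
    simp only [h4] at this
    exact this
  rw [h1, ← h3]
  exact h2

section Main2
variable {G : Type*} [Group G] [Finite G]

lemma no_prime_normal_self_index {X : Subgroup G} (hX : X.Normal) {u : ℕ} (hu : u.Prime)
    (hcard : Nat.card X = u) (hidx : (centralizer (X : Set G)).index = u) : False := by
  haveI := hX
  set φ : G →* MulAut X := MulAut.conjNormal with hφ
  have hker : φ.ker = centralizer (X : Set G) := by
    ext g
    simp only [MonoidHom.mem_ker]
    constructor
    · intro hg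
      rw [Subgroup.mem_centralizer_iff]
      intro h hh
      have h1 : ((φ g ⟨h, hh⟩ : X) : G) = ((⟨h, hh⟩ : X) : G) := by rw [hg]; rfl
      rw [hφ] at h1
      simp only [MulAut.conjNormal_apply] at h1
      -- h1 : g * h * g⁻¹ = h
      have : g * h = h * g := by
        have := congrArg (fun z => z * g) h1
        simpa [mul_assoc] using this
      exact this.symm
    · intro hg
      apply MulEquiv.ext
      rintro ⟨h, hh⟩
      apply Subtype.ext
      rw [hφ]
      simp only [MulAut.conjNormal_apply, MulAut.one_apply]
      have h5 := (Subgroup.mem_centralizer_iff.mp hg) h hh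
      -- h5 : h * g = g * h ; goal g * h * g⁻¹ = h
      rw [← h5]
      group
  have h1 : u ∣ Nat.card (MulAut X) := by
    have he : φ.ker.index = Nat.card φ.range := Subgroup.index_ker φ
    rw [hker, hidx] at he
    rw [he]
    exact Subgroup.card_subgroup_dvd_card _
  have h2 := card_mulAut_dvd_factorial X
  rw [hcard] at h2
  have h3 : u ∣ Nat.factorial (u - 1) := h1.trans h2
  have h4 := (Nat.Prime.dvd_factorial hu).mp h3
  have := hu.two_le
  omega

/-- group version: a finite group of composite order has a subgroup ≠ ⊥, ⊤ -/
lemma exists_nontrivial_proper_subgroup (H : Type*) [Group H] [Finite H]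
    (h1 : 1 < Nat.card H) (h2 : ¬ (Nat.card H).Prime) :
    ∃ S : Subgroup H, S ≠ ⊥ ∧ S ≠ ⊤ := by
  obtain ⟨S, hS⟩ := exists_subgroup_prime (G := H) (Nat.card H).minFac
    (Nat.minFac_prime (Nat.ne_of_gt h1)) (Nat.minFac_dvd _)
  have hprime : (Nat.card H).minFac.Prime := Nat.minFac_prime (Nat.ne_of_gt h1)
  refine ⟨S, ?_, ?_⟩
  · intro he
    rw [he, Subgroup.card_bot] at hS
    exact hprime.ne_one hS.symm
  · intro he
    rw [he] at hS
    have : Nat.card (⊤ : Subgroup H) = Nat.card H := Nat.card_congr Subgroup.topEquiv.toEquiv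
    rw [this] at hS
    exact h2 (hS ▸ hprime)

lemma forward_direction (hd : DenseCD G) {p q : ℕ} (hp : p.Prime) (hq : q.Prime)
    (hne : p ≠ q) (hpd : p ∣ Nat.card G) (hqd : q ∣ Nat.card G) :
    ∃ r t : ℕ, r.Prime ∧ t.Prime ∧ r ≠ t ∧ Nat.card G = r * t ∧ ¬ ∀ a b : G, a * b = b * a := by
  classical
  set n := Nat.card G with hn
  have hn0 : 0 < n := Nat.card_pos
  have hn2 : 2 ≤ n := le_trans hp.two_le (Nat.le_of_dvd hn0 hpd)
  obtain ⟨A, hACD, hAself⟩ := exists_selfCentralizing hd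
  have hmsq : mStar G = Nat.card A * Nat.card A := by
    rw [← hACD]
    unfold mCD
    rw [hAself]
  obtain ⟨M, hMCD, hMmin⟩ := exists_min_CD G
  have hMnormal : M.Normal := min_CD_normal hMCD hMmin
  have hboth : ∀ X ∈ CD G, X ≤ centralizer (M : Set G) := by
    intro X hX
    exact le_centralizer_iff.mpr (hMmin _ (centralizer_mem_CD hX).1)
  have hZle : Subgroup.center G ≤ M := center_le_of_mem_CD hMCD
  have hcomp : ∀ K : Subgroup G, 1 < Nat.card K → ¬(Nat.card K).Prime →
      ∃ X ∈ CD G, ⊥ < X ∧ X < K := by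
    intro K h1 h2
    obtain ⟨L, hL1, hL2⟩ := exists_between_of_composite h1 h2
    exact hd ⊥ K (lt_trans hL1 hL2) ⟨L, hL1, hL2⟩
  have hMcase : Nat.card M = 1 ∨ (Nat.card M).Prime := by
    by_contra hcon
    push_neg at hcon
    obtain ⟨h1, h2⟩ := hcon
    have hM1 : 1 < Nat.card M := lt_of_le_of_ne Nat.card_pos (Ne.symm h1)
    obtain ⟨X, hXCD, _, hXM⟩ := hcomp M hM1 h2
    exact absurd (lt_of_le_of_lt (hMmin X hXCD) hXM) (lt_irrefl M)
  rcases hMcase with hM1 | hMr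
  · -- CASE A : M = ⊥, contradiction
    exfalso
    have hMbot : M = ⊥ := Subgroup.card_eq_one.mp hM1
    have hstar : mStar G = n := by
      rw [hMbot] at hMCD
      rw [← hMCD, mCD_bot]
    have hnsq : n = Nat.card A * Nat.card A := by rw [← hstar, hmsq]
    set u := n.minFac with hu
    have hup : u.Prime := Nat.minFac_prime (by omega)
    have hua : u ∣ Nat.card A := by
      have hdvd : u ∣ Nat.card A * Nat.card A := by
        rw [← hnsq]
        exact n.minFac_dvd
      rcases (Nat.Prime.dvd_mul hup).mp hdvd with h | h <;> exact h
    have hu2 : u ^ 2 ∣ n := by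
      rw [pow_two, hnsq]
      exact mul_dvd_mul hua hua
    haveI : Fact u.Prime := ⟨hup⟩
    obtain ⟨K, hK⟩ := Sylow.exists_subgroup_card_pow_prime u (n := 2) hu2
    have hK1 : 1 < Nat.card K := by
      rw [hK]
      nlinarith [hup.two_le]
    obtain ⟨X, hXCD, hbX, hXK⟩ := hcomp K hK1 (hK ▸ prime_sq_not_prime u hup)
    have hcardX : Nat.card X = u := by
      have hdvd : Nat.card X ∣ u ^ 2 := hK ▸ Subgroup.card_dvd_of_le hXK.le
      obtain ⟨k, hk2, hkeq⟩ := (Nat.dvd_prime_pow hup).mp hdvd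
      interval_cases k
      · exfalso
        rw [pow_zero] at hkeq
        exact (bot_lt_iff_ne_bot.mp hbX) (Subgroup.card_eq_one.mp hkeq)
      · rw [hkeq, pow_one]
      · exfalso
        have := card_lt_of_lt hXK
        rw [hK, hkeq] at this
        exact lt_irrefl _ this
    have hmX : u * Nat.card (centralizer (X : Set G)) = n := by
      have := hXCD
      rw [CD, Set.mem_setOf_eq] at this
      rw [← hcardX, ← hstar]
      exact this
    have hidx : (centralizer (X : Set G)).index = u := by
      have h1 : Nat.card (centralizer (X : Set G)) * (centralizer (X : Set G)).index = n :=
        Subgroup.card_mul_index _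
      have h2 : Nat.card (centralizer (X : Set G)) * u = n := by
        rw [mul_comm] at hmX
        exact hmX
      have hpos : 0 < Nat.card (centralizer (X : Set G)) := Nat.card_pos
      exact Nat.eq_of_mul_eq_mul_left hpos (h1.trans h2.symm)
    have hDnormal : (centralizer (X : Set G)).Normal :=
      normal_of_index_minFac (by omega) hidx
    have hCDnormal : (centralizer ((centralizer (X : Set G) : Subgroup G) : Set G)).Normal :=
      normal_centralizer hDnormal
    set D := centralizer (X : Set G) with hD
    set W := centralizer (D : Set G) ⊓ D with hW
    have hWnormal : W.Normal := normal_inf hCDnormal hDnormal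
    have hXW : X ≤ W := by
      apply le_inf
      · exact le_centralizer_iff.mpr le_rfl
      · exact prime_card_le_centralizer hup hcardX
    have hDCW : D ≤ centralizer (W : Set G) := le_centralizer_iff.mpr inf_le_left
    have hcardD : Nat.card D * u = n := by rw [mul_comm] at hmX; exact hmX
    have hWu : Nat.card W ≤ u := by
      have h1 : mCD G W ≤ n := hstar ▸ mCD_le_mStar W
      have h2 : Nat.card W * Nat.card D ≤ Nat.card W * Nat.card (centralizer (W : Set G)) :=
        Nat.mul_le_mul_left _ (Subgroup.card_le_of_le hDCW)
      have h3 : Nat.card W * Nat.card D ≤ Nat.card D * u := by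
        calc Nat.card W * Nat.card D ≤ Nat.card W * Nat.card (centralizer (W : Set G)) := h2
          _ = mCD G W := rfl
          _ ≤ n := h1
          _ = Nat.card D * u := hcardD.symm
      have hpos : 0 < Nat.card D := Nat.card_pos
      calc Nat.card W = Nat.card W * Nat.card D / Nat.card D := by
            rw [Nat.mul_div_cancel _ hpos]
        _ ≤ Nat.card D * u / Nat.card D := Nat.div_le_div_right h3
        _ = u := by rw [mul_comm, Nat.mul_div_cancel _ hpos]
    have hXeqW : X = W := by
      apply Subgroup.eq_of_le_of_card_ge hXW
      rw [hcardX]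
      exact hWu
    have hXnormal : X.Normal := hXeqW ▸ hWnormal
    exact no_prime_normal_self_index hXnormal hup hcardX hidx
  · -- CASE B : card M = r prime
    set r := Nat.card M with hrdef
    have hr : r.Prime := hMr
    have hrn : r ∣ n := Subgroup.card_subgroup_dvd_card M
    -- no prime s ≠ r has s^2 ∣ n
    have hs1 : ∀ s : ℕ, s.Prime → s ≠ r → ¬ (s ^ 2 ∣ n) := by
      intro s hs hsne hdvd
      haveI : Fact s.Prime := ⟨hs⟩
      obtain ⟨K, hK⟩ := Sylow.exists_subgroup_card_pow_prime s (n := 2) hdvd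
      have hK1 : 1 < Nat.card K := by rw [hK]; nlinarith [hs.two_le]
      obtain ⟨X, hXCD, _, hXK⟩ := hcomp K hK1 (hK ▸ prime_sq_not_prime s hs)
      have h1 : r ∣ s ^ 2 := by
        calc r ∣ Nat.card X := Subgroup.card_dvd_of_le (hMmin X hXCD)
          _ ∣ s ^ 2 := hK ▸ Subgroup.card_dvd_of_le hXK.le
      have h2 : r = s := (Nat.prime_dvd_prime_iff_eq hr hs).mp (hr.dvd_of_dvd_pow h1)
      exact hsne h2.symm
    -- center has card dividing r
    have hZcard : Nat.card (Subgroup.center G) = 1 ∨ Nat.card (Subgroup.center G) = r := by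
      have := Subgroup.card_dvd_of_le hZle
      exact (Nat.dvd_prime hr).mp this
    rcases hZcard with hZ1 | hZr
    · -- Subcase B2 : trivial center
      -- G is nonabelian
      have hna : ¬ ∀ a b : G, a * b = b * a := by
        intro hab
        have htop : Subgroup.center G = ⊤ := by
          rw [eq_top_iff]
          intro x _
          exact Subgroup.mem_center_iff.mpr (fun g => hab g x)
        rw [htop] at hZ1
        have : Nat.card (⊤ : Subgroup G) = n := Nat.card_congr Subgroup.topEquiv.toEquiv
        omega
      set Ms := centralizer (M : Set G) with hMs
      have hMsnormal : Ms.Normal := normal_centralizer hMnormal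
      haveI := hMsnormal
      have hMsne : Ms ≠ ⊤ := by
        intro he
        have hsub : (M : Set G) ⊆ Subgroup.center G :=
          Subgroup.centralizer_eq_top_iff_subset.mp he
        have : Nat.card M ∣ Nat.card (Subgroup.center G) :=
          Subgroup.card_dvd_of_le (fun x hx => hsub hx)
        rw [hZ1] at this
        have := Nat.le_of_dvd one_pos this
        have := hr.two_le
        omega
      set t := Ms.index with htdef
      have htn : Nat.card Ms * t = n := Subgroup.card_mul_index Ms
      have ht0 : t ≠ 0 := Subgroup.index_ne_zero_of_finite
      have ht1 : t ≠ 1 := by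
        intro he
        exact hMsne (Subgroup.index_eq_one.mp he)
      have htprime : t.Prime := by
        by_contra hnt
        have hQcard : Nat.card (G ⧸ Ms) = t := by rw [← Subgroup.index_eq_card]
        have hQ1 : 1 < Nat.card (G ⧸ Ms) := by omega
        obtain ⟨S, hSbot, hStop⟩ := exists_nontrivial_proper_subgroup (G ⧸ Ms) hQ1
          (by rw [hQcard]; exact hnt)
        set L := S.comap (QuotientGroup.mk' Ms) with hLdef
        have hMsL : Ms ≤ L := by
          intro x hx
          rw [hLdef, Subgroup.mem_comap]
          have : (QuotientGroup.mk' Ms) x = 1 := by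
            rw [← MonoidHom.mem_ker, QuotientGroup.ker_mk']
            exact hx
          rw [this]
          exact S.one_mem
        have hMsLne : Ms ≠ L := by
          obtain ⟨y, hyS, hy1⟩ : ∃ y ∈ S, y ≠ 1 := by
            by_contra hall
            push_neg at hall
            apply hSbot
            ext y
            simp only [Subgroup.mem_bot]
            exact ⟨fun hy => hall y hy, fun hy => hy ▸ S.one_mem⟩
          obtain ⟨g, hg⟩ := QuotientGroup.mk'_surjective Ms y
          intro he
          have hgL : g ∈ L := by
            rw [hLdef, Subgroup.mem_comap, hg]
            exact hyS
          rw [← he] at hgL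
          have : (QuotientGroup.mk' Ms) g = 1 := by
            rw [← MonoidHom.mem_ker, QuotientGroup.ker_mk']
            exact hgL
          rw [hg] at this
          exact hy1 this
        have hLtop : L ≠ ⊤ := by
          obtain ⟨y, hyS⟩ : ∃ y, y ∉ S := by
            by_contra hall
            push_neg at hall
            exact hStop (eq_top_iff.mpr (fun y _ => hall y))
          obtain ⟨g, hg⟩ := QuotientGroup.mk'_surjective Ms y
          intro he
          apply hyS
          have hgL : g ∈ L := he ▸ Subgroup.mem_top g
          rw [hLdef, Subgroup.mem_comap, hg] at hgL
          exact hgL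
        obtain ⟨X, hXCD, hMsX, _⟩ := hd Ms ⊤ (lt_top_iff_ne_top.mpr hMsne)
          ⟨L, lt_of_le_of_ne hMsL hMsLne, lt_top_iff_ne_top.mpr hLtop⟩
        exact absurd (lt_of_lt_of_le hMsX (hboth X hXCD)) (lt_irrefl Ms)
      -- key equation : |A|^2 * t = r * n
      have hEq : Nat.card A * Nat.card A * t = r * n := by
        have h1 : Nat.card A * Nat.card A = r * Nat.card Ms := by
          rw [← hmsq, ← hMCD]
          rfl
        rw [h1, mul_assoc, htn]
      have htdvd : t ∣ n := Dvd.intro_left _ htn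
      have hAne : Nat.card A ≠ 0 := Nat.card_pos.ne'
      -- all primes dividing n are r or t
      have hprimes : ∀ s : ℕ, s.Prime → s ∣ n → s = r ∨ s = t := by
        intro s hs hsd
        by_contra hcon
        push_neg at hcon
        obtain ⟨hsr, hst⟩ := hcon
        have hv1 : n.factorization s = 1 := by
          have hge : 1 ≤ n.factorization s :=
            (Nat.Prime.dvd_iff_one_le_factorization hs (by omega)).mp hsd
          have hlt : n.factorization s < 2 := by
            by_contra hge2
            push_neg at hge2
            exact hs1 s hs hsr ((Nat.Prime.pow_dvd_iff_le_factorization hs (by omega)).mpr hge2)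
          omega
        have := congrArg (fun m => m.factorization s) hEq
        simp only [Nat.factorization_mul (Nat.mul_ne_zero hAne hAne)
            (htprime.ne_zero :  t ≠ 0)] at this
        rw [Nat.factorization_mul hAne hAne,
          Nat.factorization_mul (hr.ne_zero) (by omega : n ≠ 0)] at this
        simp only [Finsupp.add_apply] at this
        rw [hv1] at this
        rw [Nat.Prime.factorization htprime, Nat.Prime.factorization hr] at this
        rw [Finsupp.single_apply, Finsupp.single_apply] at this
        rw [if_neg (fun h : t = s => hst h.symm), if_neg (fun h : r = s => hsr h.symm)] at this
        omega
      -- r ≠ t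
      have hrt : r ≠ t := by
        intro he
        rcases hprimes p hp hpd with h1 | h1 <;> rcases hprimes q hq hqd with h2 | h2 <;>
          [skip; skip; skip; skip] <;> omega
      -- v_t(n) = 1
      have hvt : n.factorization t = 1 := by
        have hge : 1 ≤ n.factorization t :=
          (Nat.Prime.dvd_iff_one_le_factorization htprime (by omega)).mp htdvd
        have hlt : n.factorization t < 2 := by
          by_contra hge2
          push_neg at hge2
          exact hs1 t htprime (fun h => hrt h.symm)
            ((Nat.Prime.pow_dvd_iff_le_factorization htprime (by omega)).mpr hge2)
        omega
      set a := n.factorization r with hadef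
      have ha1 : 1 ≤ a := (Nat.Prime.dvd_iff_one_le_factorization hr (by omega)).mp hrn
      -- n = r^a * t
      have hneq : n = r ^ a * t := by
        have hm0 : r ^ a * t ≠ 0 := Nat.mul_ne_zero (pow_ne_zero a hr.ne_zero) htprime.ne_zero
        apply Nat.dvd_antisymm
        · apply (Nat.factorization_le_iff_dvd (by omega) hm0).mp
          rw [Finsupp.le_def]
          intro s
          by_cases hsp : s.Prime
          · rw [Nat.factorization_mul (pow_ne_zero a hr.ne_zero) htprime.ne_zero,
              Nat.factorization_pow, Nat.Prime.factorization htprime,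
              Nat.Prime.factorization hr]
            simp only [Finsupp.add_apply, Finsupp.smul_apply, Finsupp.single_apply, smul_eq_mul]
            by_cases hsr : s = r
            · subst hsr
              rw [if_pos rfl, if_neg (fun h : t = r => hrt h.symm)]
              omega
            · by_cases hst : s = t
              · subst hst
                rw [if_neg (fun h : r = t => hrt h), if_pos rfl, hvt]
                omega
              · rcases Nat.eq_zero_or_pos (n.factorization s) with h0 | hpos
                · omega
                · exfalso
                  have : s ∣ n := Nat.dvd_of_factorization_pos (by omega : n.factorization s ≠ 0)
                  rcases hprimes s hsp this with h | h
                  · exact hsr h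
                  · exact hst h
          · rw [Nat.factorization_eq_zero_of_not_prime n hsp]
            omega
        · apply Nat.Coprime.mul_dvd_of_dvd_of_dvd
          · exact Nat.Coprime.pow_left a ((Nat.coprime_primes hr htprime).mpr hrt)
          · exact Nat.ordProj_dvd n r
          · exact htdvd
      rcases Nat.lt_or_ge a 2 with ha2 | ha2
      · -- a = 1 : n = r * t, done
        have : a = 1 := by omega
        refine ⟨r, t, hr, htprime, hrt, ?_, hna⟩
        rw [hneq, this, pow_one]
      · -- a ≥ 2 : contradiction
        exfalso
        obtain ⟨T, hT⟩ := exists_subgroup_prime t htprime htdvd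
        haveI := hMnormal
        have hsetmul : ((M ⊔ T : Subgroup G) : Set G) = (M : Set G) * (T : Set G) :=
          Subgroup.normal_mul M T
        have hcardMT : Nat.card (M ⊔ T : Subgroup G) ≤ r * t := by
          have h1 : Nat.card (M ⊔ T : Subgroup G)
              = Nat.card ((M : Set G) * (T : Set G) : Set G) := by
            rw [← hsetmul]
            simp [SetLike.coe_sort_coe]
          rw [h1]
          calc Nat.card ((M : Set G) * (T : Set G) : Set G)
              ≤ Nat.card (M : Set G) * Nat.card (T : Set G) := Set.natCard_mul_le
            _ = r * t := by
                simp only [SetLike.coe_sort_coe]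
                rw [hT]
        have hTMT : T < M ⊔ T := by
          apply lt_of_le_of_ne le_sup_right
          intro he
          have hMle : M ≤ T := he ▸ le_sup_left
          have : r ∣ t := hT ▸ Subgroup.card_dvd_of_le hMle
          exact hrt ((Nat.prime_dvd_prime_iff_eq hr htprime).mp this)
        have hMTtop : M ⊔ T < ⊤ := by
          rw [lt_top_iff_ne_top]
          intro he
          have : Nat.card (M ⊔ T : Subgroup G) = n := by
            rw [he]
            exact Nat.card_congr Subgroup.topEquiv.toEquiv
          rw [this] at hcardMT
          -- n = r^a * t ≥ r^2 * t > r * t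
          have hr2 : r * r ≤ r ^ a := by
            calc r * r = r ^ 2 := (pow_two r).symm
              _ ≤ r ^ a := Nat.pow_le_pow_right hr.pos ha2
          have := hr.two_le
          have := htprime.two_le
          nlinarith [hneq]
        obtain ⟨X, hXCD, hTX, _⟩ := hd T ⊤ (lt_trans hTMT hMTtop) ⟨M ⊔ T, hTMT, hMTtop⟩
        have hXMs : X ≤ Ms := hboth X hXCD
        have hcardMs : Nat.card Ms = r ^ a := by
          have h0 : 0 < t := htprime.pos
          have : Nat.card Ms * t = r ^ a * t := by rw [htn, hneq]
          exact Nat.eq_of_mul_eq_mul_right h0 this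
        have hdvd : t ∣ r ^ a := by
          calc t = Nat.card T := hT.symm
            _ ∣ Nat.card X := Subgroup.card_dvd_of_le hTX.le
            _ ∣ Nat.card Ms := Subgroup.card_dvd_of_le hXMs
            _ = r ^ a := hcardMs
        have : t = r := (Nat.prime_dvd_prime_iff_eq htprime hr).mp (htprime.dvd_of_dvd_pow hdvd)
        exact hrt this.symm
    · -- Subcase B1 : |Z| = r, contradiction via parity
      exfalso
      have hZM : Subgroup.center G = M :=
        Subgroup.eq_of_le_of_card_ge hZle (by rw [hZr])
      have hMtop : centralizer (M : Set G) = ⊤ := by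
        rw [Subgroup.centralizer_eq_top_iff_subset]
        rw [← hZM]
      have hstar : mStar G = r * n := by
        rw [← hMCD]
        unfold mCD
        rw [hMtop, ← hrdef]
        congr 1
        exact Nat.card_congr Subgroup.topEquiv.toEquiv
      -- pick prime s ≠ r dividing n
      obtain ⟨s, hs, hsr, hsd⟩ : ∃ s : ℕ, s.Prime ∧ s ≠ r ∧ s ∣ n := by
        by_cases hpr : p = r
        · exact ⟨q, hq, fun h => hne (hpr ▸ h ▸ rfl), hqd⟩
        · exact ⟨p, hp, hpr, hpd⟩
      have hv1 : n.factorization s = 1 := by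
        have hge : 1 ≤ n.factorization s :=
          (Nat.Prime.dvd_iff_one_le_factorization hs (by omega)).mp hsd
        have hlt : n.factorization s < 2 := by
          by_contra hge2
          push_neg at hge2
          exact hs1 s hs hsr ((Nat.Prime.pow_dvd_iff_le_factorization hs (by omega)).mpr hge2)
        omega
      have hEq : Nat.card A * Nat.card A = r * n := by rw [← hmsq, hstar]
      have hAne : Nat.card A ≠ 0 := Nat.card_pos.ne'
      have := congrArg (fun m => m.factorization s) hEq
      rw [Nat.factorization_mul hAne hAne,
        Nat.factorization_mul hr.ne_zero (by omega : n ≠ 0)] at this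
      simp only [Finsupp.add_apply] at this
      rw [hv1, Nat.Prime.factorization hr, Finsupp.single_apply,
        if_neg (fun h : r = s => hsr h.symm)] at this
      omega


/-- nonabelian group of order pq has trivial center -/
lemma center_trivial_of_pq {p q : ℕ} (hp : p.Prime) (hq : q.Prime) (hne : p ≠ q)
    (hn : Nat.card G = p * q) (hna : ¬ ∀ a b : G, a * b = b * a) :
    Nat.card (Subgroup.center G) = 1 := by
  set Z := Subgroup.center G with hZ
  have hdvd : Nat.card Z ∣ p * q := hn ▸ Subgroup.card_subgroup_dvd_card Z
  have habel : Nat.card Z ≠ p * q := by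
    intro he
    apply hna
    intro a b
    have : Z = ⊤ := Subgroup.eq_top_of_card_eq Z (by rw [he, hn])
    have hb : b ∈ Z := this ▸ Subgroup.mem_top b
    exact Subgroup.mem_center_iff.mp hb a
  have hprime : ∀ r s : ℕ, r.Prime → s.Prime → p * q = r * s → Nat.card Z ≠ r := by
    intro r s hr hs hrs hcz
    apply hna
    haveI : Fact s.Prime := ⟨hs⟩
    have hidx : (Z.index) = s := by
      have h1 : Nat.card Z * Z.index = Nat.card G := Subgroup.card_mul_index Z
      rw [hcz, hn, hrs] at h1
      exact Nat.eq_of_mul_eq_mul_left hr.pos h1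
    have hQ : Nat.card (G ⧸ Z) = s := by rw [← Subgroup.index_eq_card, hidx]
    haveI : IsCyclic (G ⧸ Z) := isCyclic_of_prime_card hQ
    exact commutative_of_cyclic_center_quotient (QuotientGroup.mk' Z)
      (by rw [QuotientGroup.ker_mk'])
  rcases dvd_prime_mul hp hq hne hdvd with h | h | h | h
  · exact h
  · exact absurd h (hprime p q hp hq rfl)
  · exact absurd h (hprime q p hq hp (mul_comm p q))
  · exact absurd h habel

/-- backward direction, assuming q < p -/
lemma backward_direction_aux {p q : ℕ} (hp : p.Prime) (hq : q.Prime) (hlt : q < p)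
    (hn : Nat.card G = p * q) (hna : ¬ ∀ a b : G, a * b = b * a) : DenseCD G := by
  have hne : p ≠ q := Nat.ne_of_gt hlt
  have hZ : Nat.card (Subgroup.center G) = 1 := center_trivial_of_pq hp hq hne hn hna
  -- mStar > pq
  obtain ⟨A, hA⟩ := exists_subgroup_prime p hp (hn ▸ dvd_mul_right p q)
  have hmA : p * p ≤ mCD G A := by
    unfold mCD
    rw [hA]
    have h0 := Subgroup.card_le_of_le (prime_card_le_centralizer hp hA)
    rw [hA] at h0
    exact Nat.mul_le_mul_left p h0
  have hgt : p * q < mStar G := by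
    have h1 : p * q < p * p := by nlinarith [hp.pos, hq.pos]
    exact lt_of_lt_of_le h1 (le_trans hmA (mCD_le_mStar A))
  intro H K hHK hex
  obtain ⟨L, hHL, hLK⟩ := hex
  -- card chain
  have hcH : Nat.card H ∣ Nat.card L := Subgroup.card_dvd_of_le hHL.le
  have hcL : Nat.card L ∣ Nat.card K := Subgroup.card_dvd_of_le hLK.le
  have hcK : Nat.card K ∣ p * q := hn ▸ Subgroup.card_subgroup_dvd_card K
  have hlt1 : Nat.card H < Nat.card L := card_lt_of_lt hHL
  have hlt2 : Nat.card L < Nat.card K := card_lt_of_lt hLK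
  have hL4 := dvd_prime_mul hp hq hne (hcL.trans hcK)
  have hK4 := dvd_prime_mul hp hq hne hcK
  have hq1 : 1 < q := hq.one_lt
  have hp1 : 1 < p := hp.one_lt
  have hcH1 : 0 < Nat.card H := Nat.card_pos
  have hKle : Nat.card K ≤ p * q := Nat.le_of_dvd (by positivity) hcK
  -- card L is p or q
  have hLpq : Nat.card L = p ∨ Nat.card L = q := by
    rcases hL4 with g | g | g | g
    · omega
    · left; exact g
    · right; exact g
    · omega
  -- card K = p * q
  have hKpq : Nat.card K = p * q := by
    rcases hK4 with h | h | h | h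
    · omega
    · exfalso
      rcases hLpq with g | g
      · omega
      · rw [g, h] at hcL
        rcases (Nat.dvd_prime hp).mp hcL with e | e <;> omega
    · exfalso
      rcases hLpq with g | g
      · rw [g, h] at hcL
        rcases (Nat.dvd_prime hq).mp hcL with e | e <;> omega
      · omega
    · exact h
  -- card H = 1
  have hH1 : Nat.card H = 1 := by
    rcases hLpq with g | g
    · rw [g] at hcH
      rcases (Nat.dvd_prime hp).mp hcH with e | e <;> omega
    · rw [g] at hcH
      rcases (Nat.dvd_prime hq).mp hcH with e | e <;> omega
  have hHbot : H = ⊥ := Subgroup.card_eq_one.mp hH1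
  have hKtop : K = ⊤ := Subgroup.eq_top_of_card_eq K (by rw [hKpq, hn])
  obtain ⟨X, hX⟩ := exists_mem_CD G
  refine ⟨X, hX, ?_, ?_⟩
  · rw [hHbot, bot_lt_iff_ne_bot]
    intro he
    rw [he] at hX
    have : mCD G ⊥ = mStar G := hX
    rw [mCD_bot, hn] at this
    omega
  · rw [hKtop, lt_top_iff_ne_top]
    intro he
    rw [he] at hX
    have : mCD G ⊤ = mStar G := hX
    rw [mCD_top, hZ, hn, mul_one] at this
    omega

lemma backward_direction {p q : ℕ} (hp : p.Prime) (hq : q.Prime) (hne : p ≠ q)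
    (hn : Nat.card G = p * q) (hna : ¬ ∀ a b : G, a * b = b * a) : DenseCD G := by
  rcases Ne.lt_or_gt hne with hlt | hlt
  · exact backward_direction_aux hq hp hlt (by rw [hn, mul_comm]) hna
  · exact backward_direction_aux hp hq hlt hn hna


end Main2

end CDWork

theorem stmt13 (G : Type*) [Group G] [Finite G]
    (h2 : ∃ p q : ℕ, p.Prime ∧ q.Prime ∧ p ≠ q ∧ p ∣ Nat.card G ∧ q ∣ Nat.card G) :
    DenseCD G ↔
      ∃ p q : ℕ, p.Prime ∧ q.Prime ∧ p ≠ q ∧ Nat.card G = p * q ∧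
        ¬ ∀ a b : G, a * b = b * a := by
  obtain ⟨p, q, hp, hq, hne, hpd, hqd⟩ := h2
  constructor
  · intro hd
    exact CDWork.forward_direction hd hp hq hne hpd hqd
  · rintro ⟨r, t, hr, ht, hrt, hn, hna⟩
    exact CDWork.backward_direction hr ht hrt hn hna
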